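/- If a sequence of moments m_n has classical cumulants c_n and free cumulants κ_n, then the boolean cumulants b_n satisfy b_n = Σ_{π irreducible partition of [n]} Π_{V∈π} c_{|V|} = Σ_{π irreducible noncrossing partition of [n]} Π_{V∈π} κ_{|V|}. -/

import Mathlib

/-- `P` is a partition of `Fin n`. -/
def IsPartitionOf {n : ℕ} (P : Finset (Finset (Fin n))) : Prop :=
  (∀ B ∈ P, B.Nonempty) ∧ ∀ i : Fin n, ∃! B, B ∈ P ∧ i ∈ B

/-- A subinterval of `Fin n`. -/
def IsIntervalSet {n : ℕ} (s : Finset (Fin n)) : Prop :=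
  ∃ a b : Fin n, s = Finset.Icc a b

/-- A partition is noncrossing if no two distinct blocks cross. -/
def IsNoncrossing {n : ℕ} (P : Finset (Finset (Fin n))) : Prop :=
  ∀ B ∈ P, ∀ C ∈ P, B ≠ C →
    ¬∃ a b c d : Fin n, a < b ∧ b < c ∧ c < d ∧ a ∈ B ∧ c ∈ B ∧ b ∈ C ∧ d ∈ C

/-- An interval partition: every block is an interval. -/
def IsIntervalPartition {n : ℕ} (P : Finset (Finset (Fin n))) : Prop :=
  IsPartitionOf P ∧ ∀ B ∈ P, IsIntervalSet B

/-- Two blocks cross each other. -/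
def Crosses {n : ℕ} (B C : Finset (Fin n)) : Prop :=
  ∃ a b c d : Fin n, a < b ∧ b < c ∧ c < d ∧
    ((a ∈ B ∧ c ∈ B ∧ b ∈ C ∧ d ∈ C) ∨ (a ∈ C ∧ c ∈ C ∧ b ∈ B ∧ d ∈ B))

/-- A partition of `[n]` is irreducible if `1` and `n` lie in the same connected component
of the diagram, i.e. the block of `1` and the block of `n` are joined by a chain of
crossings. -/
def IsIrreduciblePartition {n : ℕ} (P : Finset (Finset (Fin n))) : Prop :=
  ∃ (hn : 0 < n) (B C : Finset (Fin n)), B ∈ P ∧ C ∈ P ∧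
    (⟨0, hn⟩ : Fin n) ∈ B ∧ (⟨n - 1, Nat.sub_lt hn Nat.one_pos⟩ : Fin n) ∈ C ∧
    Relation.ReflTransGen (fun X Y => X ∈ P ∧ Y ∈ P ∧ Crosses X Y) B C

namespace BoolAux

open Finset Relation

attribute [local instance] Classical.propDecidable

variable {m : ℕ}

/-- The crossing relation between blocks of `P`. -/
def crel (P : Finset (Finset (Fin m))) (X Y : Finset (Fin m)) : Prop :=
  X ∈ P ∧ Y ∈ P ∧ Crosses X Y

lemma crosses_of {B C : Finset (Fin m)} {a b c d : Fin m}
    (h1 : a < b) (h2 : b < c) (h3 : c < d) (ha : a ∈ B) (hc : c ∈ B)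
    (hb : b ∈ C) (hd : d ∈ C) : Crosses B C :=
  ⟨a, b, c, d, h1, h2, h3, Or.inl ⟨ha, hc, hb, hd⟩⟩

lemma not_crosses_sep {B C : Finset (Fin m)} {k : ℕ}
    (hB : ∀ i ∈ B, (i : ℕ) < k) (hC : ∀ i ∈ C, k ≤ (i : ℕ)) : ¬ Crosses B C := by
  rintro ⟨a, b, c, d, h1, h2, h3, ⟨ha, hc, hb, hd⟩ | ⟨ha, hc, hb, hd⟩⟩
  · have := hB _ hc; have := hC _ hb
    have : (b : ℕ) < (c : ℕ) := h2
    omega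
  · have := hB _ hb; have := hC _ ha
    have : (a : ℕ) < (b : ℕ) := h1
    omega

lemma block_eq {P : Finset (Finset (Fin m))} (hP : IsPartitionOf P) {B C : Finset (Fin m)}
    {i : Fin m} (hB : B ∈ P) (hC : C ∈ P) (hiB : i ∈ B) (hiC : i ∈ C) : B = C :=
  ((hP.2 i).unique ⟨hB, hiB⟩ ⟨hC, hiC⟩)

lemma chain_mem_right {P : Finset (Finset (Fin m))} {B C : Finset (Fin m)}
    (h : ReflTransGen (crel P) B C) (hB : B ∈ P) : C ∈ P := by
  induction h with
  | refl => exact hB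
  | tail _ step _ => exact step.2.1

/-- If a crossing chain goes from a block with a point `≤ t` to a block with a
point `> t`, then some block reachable from the start has points on both sides. -/
lemma straddle {P : Finset (Finset (Fin m))} (t : ℕ) {B C : Finset (Fin m)}
    (h : ReflTransGen (crel P) B C)
    (hB : ∃ p ∈ B, (p : ℕ) ≤ t) (hC : ∃ q ∈ C, t < (q : ℕ)) :
    ∃ D, ReflTransGen (crel P) B D ∧ (∃ p ∈ D, (p : ℕ) ≤ t) ∧ ∃ q ∈ D, t < (q : ℕ) := by
  induction h using ReflTransGen.head_induction_on with
  | refl => exact ⟨C, ReflTransGen.refl, hB, hC⟩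
  | @head X Y step rest ih =>
    by_cases hX : ∃ q ∈ X, t < (q : ℕ)
    · exact ⟨X, ReflTransGen.refl, hB, hX⟩
    · push_neg at hX
      -- Y has a point ≤ t
      have hY : ∃ p ∈ Y, (p : ℕ) ≤ t := by
        obtain ⟨a, b, c, d, h1, h2, h3, ⟨ha, hc, hb, hd⟩ | ⟨ha, hc, hb, hd⟩⟩ := step.2.2
        · have hcX := hX _ hc
          have : (b : ℕ) < (c : ℕ) := h2
          exact ⟨b, hb, by omega⟩
        · have hbX := hX _ hb
          have : (a : ℕ) < (b : ℕ) := h1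
          exact ⟨a, ha, by omega⟩
      obtain ⟨D, hD1, hD2, hD3⟩ := ih hY
      exact ⟨D, ReflTransGen.head step hD1, hD2, hD3⟩

end BoolAux

namespace BoolAux

open Finset Relation

variable {n : ℕ}

/-- Blocks reachable (by crossing chains) from the block of `0`. -/
def reachedB (P : Finset (Finset (Fin (n+1)))) (X : Finset (Fin (n+1))) : Prop :=
  ∃ B, B ∈ P ∧ (0 : Fin (n+1)) ∈ B ∧ ReflTransGen (crel P) B X

/-- Points in blocks reachable from the block of `0`. -/
def reachesPt (P : Finset (Finset (Fin (n+1)))) (i : Fin (n+1)) : Prop :=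
  ∃ X, reachedB P X ∧ i ∈ X

open Classical in
/-- One plus the maximum of the connected component of the block of `0`. -/
noncomputable def kOf (P : Finset (Finset (Fin (n+1)))) : ℕ :=
  ((Finset.univ.filter (fun i => reachesPt P i)).sup (fun i => (i : ℕ))) + 1

lemma reachedB_mem {P : Finset (Finset (Fin (n+1)))} {X} (h : reachedB P X) : X ∈ P := by
  obtain ⟨B, hB, _, hc⟩ := h
  exact chain_mem_right hc hB

lemma reachedB_zero {P : Finset (Finset (Fin (n+1)))} (hP : IsPartitionOf P) :
    ∃ B, reachedB P B ∧ (0 : Fin (n+1)) ∈ B := by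
  obtain ⟨B, ⟨hB, h0⟩, _⟩ := hP.2 0
  exact ⟨B, ⟨B, hB, h0, ReflTransGen.refl⟩, h0⟩

lemma reachesPt_zero {P : Finset (Finset (Fin (n+1)))} (hP : IsPartitionOf P) :
    reachesPt P 0 := by
  obtain ⟨B, h1, h2⟩ := reachedB_zero hP
  exact ⟨B, h1, h2⟩

open Classical in
lemma lt_kOf_of_reachesPt {P : Finset (Finset (Fin (n+1)))} {i : Fin (n+1)}
    (h : reachesPt P i) : (i : ℕ) < kOf P := by
  have : i ∈ Finset.univ.filter (fun i => reachesPt P i) := by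
    simp [h]
  have h2 : (i : ℕ) ≤ (Finset.univ.filter (fun i => reachesPt P i)).sup (fun i : Fin (n+1) => (i : ℕ)) :=
    Finset.le_sup (f := fun i : Fin (n+1) => (i : ℕ)) this
  unfold kOf
  omega

lemma one_le_kOf (P : Finset (Finset (Fin (n+1)))) : 1 ≤ kOf P := Nat.le_add_left 1 _

open Classical in
lemma kOf_le (P : Finset (Finset (Fin (n+1)))) : kOf P ≤ n + 1 := by
  unfold kOf
  have : (Finset.univ.filter (fun i => reachesPt P i)).sup (fun i : Fin (n+1) => (i : ℕ)) ≤ n := by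
    apply Finset.sup_le
    intro i _
    omega
  omega

open Classical in
lemma exists_top_reachesPt {P : Finset (Finset (Fin (n+1)))} (hP : IsPartitionOf P) :
    ∃ L : Fin (n+1), reachesPt P L ∧ (L : ℕ) = kOf P - 1 := by
  have hne : (Finset.univ.filter (fun i => reachesPt P i)).Nonempty :=
    ⟨0, by simp [reachesPt_zero hP]⟩
  obtain ⟨L, hL, hsup⟩ := Finset.exists_mem_eq_sup _ hne (fun i : Fin (n+1) => (i : ℕ))
  refine ⟨L, (Finset.mem_filter.mp hL).2, ?_⟩
  unfold kOf
  omega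

lemma reachedB_small {P : Finset (Finset (Fin (n+1)))} {X} (h : reachedB P X) :
    ∀ i ∈ X, (i : ℕ) < kOf P :=
  fun i hi => lt_kOf_of_reachesPt ⟨X, h, hi⟩

/-- The cut lemma: no block of `P` straddles `kOf P`. -/
lemma cut {P : Finset (Finset (Fin (n+1)))} (hP : IsPartitionOf P) {B} (hB : B ∈ P) :
    (∀ i ∈ B, (i : ℕ) < kOf P) ∨ (∀ i ∈ B, kOf P ≤ (i : ℕ)) := by
  by_contra hcon
  push_neg at hcon
  obtain ⟨⟨q, hq, hqk⟩, ⟨p, hp, hpk⟩⟩ := hcon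
  -- q ∈ B with kOf P ≤ q, p ∈ B with p < kOf P
  by_cases hRB : reachedB P B
  · exact absurd (reachedB_small hRB q hq) (by omega)
  · -- B not reached; p.val ≥ 1
    have hp1 : 1 ≤ (p : ℕ) := by
      rcases Nat.eq_zero_or_pos (p : ℕ) with h0 | h
      · exfalso
        have : p = 0 := by ext; simpa using h0
        subst this
        exact hRB ⟨B, hB, hp, ReflTransGen.refl⟩
      · exact h
    obtain ⟨L, ⟨C0, ⟨B0, hB0, h00, hchain⟩, hLC0⟩, hLval⟩ := exists_top_reachesPt hP
    -- straddle at t := p - 1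
    have hstr := straddle (P := P) ((p : ℕ) - 1) hchain
      ⟨0, h00, by simp⟩ ⟨L, hLC0, by omega⟩
    obtain ⟨D, hDchain, ⟨d1, hd1, hd1t⟩, ⟨d2, hd2, hd2t⟩⟩ := hstr
    have hDreach : reachedB P D := ⟨B0, hB0, h00, hDchain⟩
    have hDP : D ∈ P := reachedB_mem hDreach
    have hd2ne : (d2 : ℕ) ≠ (p : ℕ) := by
      intro he
      have : d2 = p := by ext; exact he
      subst this
      have hBD : B = D := block_eq hP hB hDP hp hd2
      exact hRB (hBD ▸ hDreach)
    have hd2small : (d2 : ℕ) < kOf P := reachedB_small hDreach d2 hd2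
    -- pattern d1 < p < d2 < q
    have hcr : Crosses D B :=
      crosses_of (a := d1) (b := p) (c := d2) (d := q)
        (by rw [Fin.lt_def]; omega) (by rw [Fin.lt_def]; omega)
        (by rw [Fin.lt_def]; omega) hd1 hd2 hp hq
    exact hRB ⟨B0, hB0, h00, ReflTransGen.tail hDchain ⟨hDP, hB, hcr⟩⟩

end BoolAux

namespace BoolAux

open Finset Relation

variable {a b : ℕ}

/-- Order-embedding `Fin a → Fin b` with offset `o`. -/
def emb (o : ℕ) (h : o + a ≤ b) : Fin a → Fin b := fun i => ⟨o + i, by omega⟩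

lemma emb_val (o : ℕ) (h : o + a ≤ b) (i : Fin a) : ((emb o h i : Fin b) : ℕ) = o + i := rfl

lemma emb_inj (o : ℕ) (h : o + a ≤ b) : Function.Injective (emb o h) := by
  intro i j hij
  have : o + (i : ℕ) = o + j := congrArg Fin.val hij
  ext; omega

lemma emb_lt_iff (o : ℕ) (h : o + a ≤ b) {i j : Fin a} : emb o h i < emb o h j ↔ i < j := by
  rw [Fin.lt_def, Fin.lt_def, emb_val, emb_val]
  omega

lemma emb_injOn (o : ℕ) (h : o + a ≤ b) {s : Set (Fin b)} : Set.InjOn (emb o h) (emb o h ⁻¹' s) :=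
  (emb_inj o h).injOn

lemma card_image_emb (o : ℕ) (h : o + a ≤ b) (B : Finset (Fin a)) :
    (B.image (emb o h)).card = B.card :=
  Finset.card_image_of_injective _ (emb_inj o h)

lemma image_emb_bounds (o : ℕ) (h : o + a ≤ b) {B : Finset (Fin a)} {i : Fin b}
    (hi : i ∈ B.image (emb o h)) : o ≤ (i : ℕ) ∧ (i : ℕ) < o + a := by
  obtain ⟨j, _, rfl⟩ := Finset.mem_image.mp hi
  rw [emb_val]
  omega

lemma crosses_image_emb_iff (o : ℕ) (h : o + a ≤ b) {B C : Finset (Fin a)} :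
    Crosses (B.image (emb o h)) (C.image (emb o h)) ↔ Crosses B C := by
  constructor
  · rintro ⟨x, y, z, w, h1, h2, h3, hm⟩
    have key : ∀ {s : Finset (Fin a)} {i : Fin b}, i ∈ s.image (emb o h) →
        ∃ j ∈ s, emb o h j = i := fun hi => Finset.mem_image.mp hi
    rcases hm with ⟨hx, hz, hy, hw⟩ | ⟨hx, hz, hy, hw⟩
    · obtain ⟨x', hx', rfl⟩ := key hx
      obtain ⟨z', hz', rfl⟩ := key hz
      obtain ⟨y', hy', rfl⟩ := key hy
      obtain ⟨w', hw', rfl⟩ := key hw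
      exact ⟨x', y', z', w', (emb_lt_iff o h).mp h1, (emb_lt_iff o h).mp h2,
        (emb_lt_iff o h).mp h3, Or.inl ⟨hx', hz', hy', hw'⟩⟩
    · obtain ⟨x', hx', rfl⟩ := key hx
      obtain ⟨z', hz', rfl⟩ := key hz
      obtain ⟨y', hy', rfl⟩ := key hy
      obtain ⟨w', hw', rfl⟩ := key hw
      exact ⟨x', y', z', w', (emb_lt_iff o h).mp h1, (emb_lt_iff o h).mp h2,
        (emb_lt_iff o h).mp h3, Or.inr ⟨hx', hz', hy', hw'⟩⟩
  · rintro ⟨x, y, z, w, h1, h2, h3, hm⟩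
    refine ⟨emb o h x, emb o h y, emb o h z, emb o h w,
      (emb_lt_iff o h).mpr h1, (emb_lt_iff o h).mpr h2, (emb_lt_iff o h).mpr h3, ?_⟩
    rcases hm with ⟨hx, hz, hy, hw⟩ | ⟨hx, hz, hy, hw⟩
    · exact Or.inl ⟨Finset.mem_image_of_mem _ hx, Finset.mem_image_of_mem _ hz,
        Finset.mem_image_of_mem _ hy, Finset.mem_image_of_mem _ hw⟩
    · exact Or.inr ⟨Finset.mem_image_of_mem _ hx, Finset.mem_image_of_mem _ hz,
        Finset.mem_image_of_mem _ hy, Finset.mem_image_of_mem _ hw⟩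

lemma preimage_image_emb (o : ℕ) (h : o + a ≤ b) (B : Finset (Fin a)) :
    (B.image (emb o h)).preimage (emb o h) (emb_injOn o h) = B := by
  ext j
  simp only [Finset.mem_preimage, Finset.mem_image]
  constructor
  · rintro ⟨j', hj', he⟩
    rwa [emb_inj o h he] at hj'
  · exact fun hj => ⟨j, hj, rfl⟩

lemma image_preimage_emb (o : ℕ) (h : o + a ≤ b) {B : Finset (Fin b)}
    (hB : ∀ i ∈ B, o ≤ (i : ℕ) ∧ (i : ℕ) < o + a) :
    (B.preimage (emb o h) (emb_injOn o h)).image (emb o h) = B := by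
  ext i
  simp only [Finset.mem_image, Finset.mem_preimage]
  constructor
  · rintro ⟨j, hj, rfl⟩
    exact hj
  · intro hi
    obtain ⟨h1, h2⟩ := hB i hi
    refine ⟨⟨(i : ℕ) - o, by omega⟩, ?_, ?_⟩
    · have : emb o h ⟨(i : ℕ) - o, by omega⟩ = i := by
        apply Fin.ext
        show o + ((i : ℕ) - o) = (i : ℕ)
        omega
      rwa [this]
    · apply Fin.ext
      show o + ((i : ℕ) - o) = (i : ℕ)
      omega

lemma card_preimage_emb (o : ℕ) (h : o + a ≤ b) {B : Finset (Fin b)}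
    (hB : ∀ i ∈ B, o ≤ (i : ℕ) ∧ (i : ℕ) < o + a) :
    (B.preimage (emb o h) (emb_injOn o h)).card = B.card := by
  conv_rhs => rw [← image_preimage_emb o h hB]
  rw [card_image_emb]

lemma nonempty_preimage_emb (o : ℕ) (h : o + a ≤ b) {B : Finset (Fin b)}
    (hB : ∀ i ∈ B, o ≤ (i : ℕ) ∧ (i : ℕ) < o + a) (hne : B.Nonempty) :
    (B.preimage (emb o h) (emb_injOn o h)).Nonempty := by
  obtain ⟨i, hi⟩ := hne
  obtain ⟨h1, h2⟩ := hB i hi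
  refine ⟨⟨(i : ℕ) - o, by omega⟩, ?_⟩
  rw [Finset.mem_preimage]
  have : emb o h ⟨(i : ℕ) - o, by omega⟩ = i := by
    apply Fin.ext
    show o + ((i : ℕ) - o) = (i : ℕ)
    omega
  rwa [this]

/-- Characterization of interval sets for nonempty sets: order-convexity. -/
lemma isIntervalSet_iff {m : ℕ} {s : Finset (Fin m)} (hs : s.Nonempty) :
    IsIntervalSet s ↔ ∀ x ∈ s, ∀ y ∈ s, ∀ z : Fin m, x ≤ z → z ≤ y → z ∈ s := by
  constructor
  · rintro ⟨p, q, rfl⟩ x hx y hy z h1 h2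
    rw [Finset.mem_Icc] at *
    exact ⟨le_trans hx.1 h1, le_trans h2 hy.2⟩
  · intro h
    refine ⟨s.min' hs, s.max' hs, ?_⟩
    ext z
    rw [Finset.mem_Icc]
    constructor
    · intro hz
      exact ⟨s.min'_le z hz, s.le_max' z hz⟩
    · rintro ⟨h1, h2⟩
      exact h _ (s.min'_mem hs) _ (s.max'_mem hs) z h1 h2

lemma isIntervalSet_image_emb_iff (o : ℕ) (h : o + a ≤ b) {B : Finset (Fin a)}
    (hne : B.Nonempty) :
    IsIntervalSet (B.image (emb o h)) ↔ IsIntervalSet B := by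
  have hne' : (B.image (emb o h)).Nonempty := hne.image _
  rw [isIntervalSet_iff hne, isIntervalSet_iff hne']
  constructor
  · intro h' x hx y hy z h1 h2
    have := h' _ (Finset.mem_image_of_mem _ hx) _ (Finset.mem_image_of_mem _ hy)
      (emb o h z) (by rw [Fin.le_def, emb_val, emb_val]; exact Nat.add_le_add_left (Fin.le_def.mp h1) o)
      (by rw [Fin.le_def, emb_val, emb_val]; exact Nat.add_le_add_left (Fin.le_def.mp h2) o)
    obtain ⟨z', hz', he⟩ := Finset.mem_image.mp this
    rwa [emb_inj o h he] at hz'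
  · intro h' x hx y hy z h1 h2
    obtain ⟨x', hx', rfl⟩ := Finset.mem_image.mp hx
    obtain ⟨y', hy', rfl⟩ := Finset.mem_image.mp hy
    have hz1 : o ≤ (z : ℕ) := le_trans (by rw [emb_val]; omega) (Fin.le_def.mp h1)
    have hz2 : (z : ℕ) < o + a := by
      have := Fin.le_def.mp h2
      rw [emb_val] at this
      omega
    have hze : emb o h ⟨(z : ℕ) - o, by omega⟩ = z := by
      apply Fin.ext
      show o + ((z : ℕ) - o) = (z : ℕ)
      omega
    rw [← hze]
    refine Finset.mem_image_of_mem _ (h' _ hx' _ hy' _ ?_ ?_)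
    · rw [Fin.le_def]
      have := Fin.le_def.mp h1
      rw [emb_val] at this
      show (x' : ℕ) ≤ (z : ℕ) - o
      omega
    · rw [Fin.le_def]
      have := Fin.le_def.mp h2
      rw [emb_val] at this
      show (z : ℕ) - o ≤ (y' : ℕ)
      omega

end BoolAux

namespace BoolAux

open Finset Relation

attribute [local instance] Classical.propDecidable

variable {n k : ℕ}

def e1 (n k : ℕ) (hk : k ≤ n + 1) : Fin k → Fin (n + 1) := emb 0 (by omega)

def e2 (n k : ℕ) (hk : k ≤ n + 1) : Fin (n + 1 - k) → Fin (n + 1) := emb k (by omega)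

def mapP {a b : ℕ} (f : Fin a → Fin b) (P : Finset (Finset (Fin a))) :
    Finset (Finset (Fin b)) := P.image (fun B => B.image f)

lemma mem_mapP {a b : ℕ} {f : Fin a → Fin b} {P : Finset (Finset (Fin a))}
    {X : Finset (Fin b)} : X ∈ mapP f P ↔ ∃ B ∈ P, B.image f = X := Finset.mem_image

/-- Combine a partition of `Fin k` and one of `Fin (n+1-k)` into one of `Fin (n+1)`. -/
def combine (hk : k ≤ n + 1) (R : Finset (Finset (Fin k)))
    (S : Finset (Finset (Fin (n + 1 - k)))) : Finset (Finset (Fin (n + 1))) :=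
  mapP (e1 n k hk) R ∪ mapP (e2 n k hk) S

lemma part1_small {hk : k ≤ n + 1} {R : Finset (Finset (Fin k))} {X}
    (hX : X ∈ mapP (e1 n k hk) R) : ∀ i ∈ X, (i : ℕ) < k := by
  obtain ⟨B, _, rfl⟩ := mem_mapP.mp hX
  intro i hi
  have := image_emb_bounds 0 (by omega) hi
  omega

lemma part2_large {hk : k ≤ n + 1} {S : Finset (Finset (Fin (n + 1 - k)))} {X}
    (hX : X ∈ mapP (e2 n k hk) S) : ∀ i ∈ X, k ≤ (i : ℕ) := by
  obtain ⟨B, _, rfl⟩ := mem_mapP.mp hX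
  intro i hi
  have := image_emb_bounds k (by omega) hi
  omega

lemma part_not_both {hk : k ≤ n + 1} {R : Finset (Finset (Fin k))}
    {S : Finset (Finset (Fin (n + 1 - k)))} (hR : IsPartitionOf R) {X}
    (h1 : X ∈ mapP (e1 n k hk) R) : X ∉ mapP (e2 n k hk) S := by
  intro h2
  obtain ⟨B, hB, rfl⟩ := mem_mapP.mp h1
  obtain ⟨i, hi⟩ := (hR.1 B hB).image (e1 n k hk)
  have := part1_small h1 i hi
  have := part2_large h2 i hi
  omega

lemma combine_isPartition (hk : k ≤ n + 1) {R : Finset (Finset (Fin k))}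
    {S : Finset (Finset (Fin (n + 1 - k)))} (hR : IsPartitionOf R) (hS : IsPartitionOf S) :
    IsPartitionOf (combine hk R S) := by
  constructor
  · intro X hX
    rcases Finset.mem_union.mp hX with h | h
    · obtain ⟨B, hB, rfl⟩ := mem_mapP.mp h
      exact (hR.1 B hB).image _
    · obtain ⟨B, hB, rfl⟩ := mem_mapP.mp h
      exact (hS.1 B hB).image _
  · intro i
    by_cases hik : (i : ℕ) < k
    · set j : Fin k := ⟨(i : ℕ), hik⟩ with hj
      have hej : e1 n k hk j = i := by
        apply Fin.ext
        show 0 + (i : ℕ) = (i : ℕ)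
        omega
      obtain ⟨B, ⟨hB, hjB⟩, huniq⟩ := hR.2 j
      refine ⟨B.image (e1 n k hk), ⟨Finset.mem_union_left _ (mem_mapP.mpr ⟨B, hB, rfl⟩),
        hej ▸ Finset.mem_image_of_mem _ hjB⟩, ?_⟩
      rintro X ⟨hX, hiX⟩
      rcases Finset.mem_union.mp hX with h | h
      · obtain ⟨C, hC, rfl⟩ := mem_mapP.mp h
        obtain ⟨j', hj', hej'⟩ := Finset.mem_image.mp hiX
        have : j' = j := by
          apply Fin.ext
          have : 0 + (j' : ℕ) = (i : ℕ) := congrArg Fin.val hej'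
          show (j' : ℕ) = (i : ℕ)
          omega
        subst this
        rw [huniq C ⟨hC, hj'⟩]
      · exact absurd (part2_large h i hiX) (by omega)
    · set j : Fin (n + 1 - k) := ⟨(i : ℕ) - k, by omega⟩ with hj
      have hej : e2 n k hk j = i := by
        apply Fin.ext
        show k + ((i : ℕ) - k) = (i : ℕ)
        omega
      obtain ⟨B, ⟨hB, hjB⟩, huniq⟩ := hS.2 j
      refine ⟨B.image (e2 n k hk), ⟨Finset.mem_union_right _ (mem_mapP.mpr ⟨B, hB, rfl⟩),
        hej ▸ Finset.mem_image_of_mem _ hjB⟩, ?_⟩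
      rintro X ⟨hX, hiX⟩
      rcases Finset.mem_union.mp hX with h | h
      · exact absurd (part1_small h i hiX) (by omega)
      · obtain ⟨C, hC, rfl⟩ := mem_mapP.mp h
        obtain ⟨j', hj', hej'⟩ := Finset.mem_image.mp hiX
        have : j' = j := by
          apply Fin.ext
          have : k + (j' : ℕ) = (i : ℕ) := congrArg Fin.val hej'
          show (j' : ℕ) = (i : ℕ) - k
          omega
        subst this
        rw [huniq C ⟨hC, hj'⟩]

/-- Any crossing chain in `combine` starting in part 1 stays in part 1. -/
lemma chain_stays_part1 {hk : k ≤ n + 1} {R : Finset (Finset (Fin k))}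
    {S : Finset (Finset (Fin (n + 1 - k)))} (hR : IsPartitionOf R)
    {X Y : Finset (Fin (n + 1))}
    (h : ReflTransGen (crel (combine hk R S)) X Y) (hX : X ∈ mapP (e1 n k hk) R) :
    Y ∈ mapP (e1 n k hk) R := by
  induction h with
  | refl => exact hX
  | tail _ step ih =>
    rename_i Z W _
    rcases Finset.mem_union.mp step.2.1 with h | h
    · exact h
    · exfalso
      exact not_crosses_sep (part1_small ih) (part2_large h) step.2.2

lemma kOf_combine (hk : k ≤ n + 1) (hk1 : 1 ≤ k) {R : Finset (Finset (Fin k))}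
    {S : Finset (Finset (Fin (n + 1 - k)))} (hR : IsPartitionOf R) (hS : IsPartitionOf S)
    (hRirr : IsIrreduciblePartition R) : kOf (combine hk R S) = k := by
  set P := combine hk R S with hPdef
  have hP : IsPartitionOf P := combine_isPartition hk hR hS
  -- upper bound: every reached point is < k
  have hub : ∀ i : Fin (n + 1), reachesPt P i → (i : ℕ) < k := by
    rintro i ⟨X, ⟨B0, hB0, h00, hchain⟩, hiX⟩
    have hB0p1 : B0 ∈ mapP (e1 n k hk) R := by
      rcases Finset.mem_union.mp hB0 with h | h
      · exact h
      · exact absurd (part2_large h 0 h00) (by simp; omega)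
    exact part1_small (chain_stays_part1 hR hchain hB0p1) i hiX
  -- lower bound: the point k-1 is reached
  obtain ⟨hkpos, B, C, hB, hC, h0B, hlC, hchain⟩ := hRirr
  have hlb : reachesPt P ⟨k - 1, by omega⟩ := by
    have hlift : ReflTransGen (crel P) (B.image (e1 n k hk)) (C.image (e1 n k hk)) := by
      refine ReflTransGen.lift (fun X => X.image (e1 n k hk)) ?_ _ _ hchain
      rintro X Y ⟨hXR, hYR, hcr⟩
      exact ⟨Finset.mem_union_left _ (mem_mapP.mpr ⟨X, hXR, rfl⟩),
        Finset.mem_union_left _ (mem_mapP.mpr ⟨Y, hYR, rfl⟩),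
        (crosses_image_emb_iff 0 (by omega)).mpr hcr⟩
    refine ⟨C.image (e1 n k hk), ⟨B.image (e1 n k hk), ?_, ?_, hlift⟩, ?_⟩
    · exact Finset.mem_union_left _ (mem_mapP.mpr ⟨B, hB, rfl⟩)
    · have : e1 n k hk ⟨0, hkpos⟩ = 0 := by
        apply Fin.ext
        show 0 + 0 = 0
        rfl
      exact this ▸ Finset.mem_image_of_mem _ h0B
    · have : e1 n k hk ⟨k - 1, Nat.sub_lt hkpos Nat.one_pos⟩ = ⟨k - 1, by omega⟩ := by
        apply Fin.ext
        show 0 + (k - 1) = k - 1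
        omega
      exact this ▸ Finset.mem_image_of_mem _ hlC
  have h1 : kOf P ≤ k := by
    by_contra hcon
    push_neg at hcon
    obtain ⟨L, hL, hLval⟩ := exists_top_reachesPt hP
    have := hub L hL
    omega
  have h2 : k ≤ kOf P := by
    have := lt_kOf_of_reachesPt hlb
    simp only [] at this
    omega
  omega

/-- Product of `f ∘ card` over the blocks of `combine` splits as a product of products. -/
lemma prod_combine (hk : k ≤ n + 1) {R : Finset (Finset (Fin k))}
    {S : Finset (Finset (Fin (n + 1 - k)))} (hR : IsPartitionOf R) (hS : IsPartitionOf S)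
    (f : ℕ → ℝ) :
    ∏ B ∈ combine hk R S, f B.card = (∏ B ∈ R, f B.card) * ∏ B ∈ S, f B.card := by
  have hdisj : Disjoint (mapP (e1 n k hk) R) (mapP (e2 n k hk) S) := by
    rw [Finset.disjoint_left]
    intro X h1 h2
    exact part_not_both hR h1 h2
  rw [combine, Finset.prod_union hdisj]
  congr 1
  · rw [mapP, Finset.prod_image
      (fun B _ C _ he => Finset.image_injective (emb_inj 0 (by omega : 0 + k ≤ n + 1)) he)]
    exact Finset.prod_congr rfl fun B _ =>
      congrArg f (card_image_emb 0 (by omega : 0 + k ≤ n + 1) B)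
  · rw [mapP, Finset.prod_image
      (fun B _ C _ he => Finset.image_injective
        (emb_inj k (by omega : k + (n + 1 - k) ≤ n + 1)) he)]
    exact Finset.prod_congr rfl fun B _ =>
      congrArg f (card_image_emb k (by omega : k + (n + 1 - k) ≤ n + 1) B)

end BoolAux

namespace BoolAux

open Finset Relation

attribute [local instance] Classical.propDecidable

variable {n k : ℕ}

def psmall (k : ℕ) {n : ℕ} (B : Finset (Fin (n + 1))) : Prop := ∀ i ∈ B, (i : ℕ) < k

def plarge (k : ℕ) {n : ℕ} (B : Finset (Fin (n + 1))) : Prop := ∀ i ∈ B, k ≤ (i : ℕ)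

noncomputable def dec1 (hk : k ≤ n + 1) (P : Finset (Finset (Fin (n + 1)))) : Finset (Finset (Fin k)) :=
  (P.filter (psmall k)).image
    (fun B => B.preimage (e1 n k hk) ((emb_inj 0 (by omega : 0 + k ≤ n + 1)).injOn))

noncomputable def dec2 (hk : k ≤ n + 1) (P : Finset (Finset (Fin (n + 1)))) :
    Finset (Finset (Fin (n + 1 - k))) :=
  (P.filter (plarge k)).image
    (fun B => B.preimage (e2 n k hk)
      ((emb_inj k (by omega : k + (n + 1 - k) ≤ n + 1)).injOn))

lemma small_bounds {B : Finset (Fin (n + 1))} (h : psmall k B) :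
    ∀ i ∈ B, 0 ≤ (i : ℕ) ∧ (i : ℕ) < 0 + k :=
  fun i hi => ⟨Nat.zero_le _, by have := h i hi; omega⟩

lemma large_bounds (hk : k ≤ n + 1) {B : Finset (Fin (n + 1))} (h : plarge k B) :
    ∀ i ∈ B, k ≤ (i : ℕ) ∧ (i : ℕ) < k + (n + 1 - k) :=
  fun i hi => ⟨h i hi, by have := i.isLt; omega⟩

lemma mem_dec1 {hk : k ≤ n + 1} {P : Finset (Finset (Fin (n + 1)))} {X : Finset (Fin k)} :
    X ∈ dec1 hk P ↔ ∃ B, (B ∈ P ∧ psmall k B) ∧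
      B.preimage (e1 n k hk) ((emb_inj 0 (by omega : 0 + k ≤ n + 1)).injOn) = X := by
  rw [dec1]
  simp only [Finset.mem_image, Finset.mem_filter]

lemma mem_dec2 {hk : k ≤ n + 1} {P : Finset (Finset (Fin (n + 1)))}
    {X : Finset (Fin (n + 1 - k))} :
    X ∈ dec2 hk P ↔ ∃ B, (B ∈ P ∧ plarge k B) ∧
      B.preimage (e2 n k hk) ((emb_inj k (by omega : k + (n + 1 - k) ≤ n + 1)).injOn) = X := by
  rw [dec2]
  simp only [Finset.mem_image, Finset.mem_filter]

lemma combine_dec (hk : k ≤ n + 1) {P : Finset (Finset (Fin (n + 1)))}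
    (hP : IsPartitionOf P) (hkOf : kOf P = k) :
    combine hk (dec1 hk P) (dec2 hk P) = P := by
  have hmap1 : mapP (e1 n k hk) (dec1 hk P) = P.filter (psmall k) := by
    rw [mapP, dec1, Finset.image_image]
    rw [Finset.image_congr (g := id), Finset.image_id]
    intro B hB
    simp only [Finset.mem_coe, Finset.mem_filter] at hB
    exact image_preimage_emb 0 (by omega) (small_bounds hB.2)
  have hmap2 : mapP (e2 n k hk) (dec2 hk P) = P.filter (plarge k) := by
    rw [mapP, dec2, Finset.image_image]
    rw [Finset.image_congr (g := id), Finset.image_id]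
    intro B hB
    simp only [Finset.mem_coe, Finset.mem_filter] at hB
    exact image_preimage_emb k (by omega) (large_bounds hk hB.2)
  rw [combine, hmap1, hmap2]
  ext B
  simp only [Finset.mem_union, Finset.mem_filter]
  constructor
  · rintro (⟨h, _⟩ | ⟨h, _⟩) <;> exact h
  · intro hB
    rcases cut hP hB with h | h
    · exact Or.inl ⟨hB, fun i hi => by have := h i hi; omega⟩
    · exact Or.inr ⟨hB, fun i hi => by have := h i hi; omega⟩

lemma dec1_isPartition (hk : k ≤ n + 1) {P : Finset (Finset (Fin (n + 1)))}
    (hP : IsPartitionOf P) (hkOf : kOf P = k) : IsPartitionOf (dec1 hk P) := by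
  constructor
  · intro X hX
    obtain ⟨B, ⟨hB, hBs⟩, rfl⟩ := mem_dec1.mp hX
    exact nonempty_preimage_emb 0 (by omega) (small_bounds hBs) (hP.1 B hB)
  · intro j
    have hjk : (e1 n k hk j : ℕ) = (j : ℕ) := by
      show 0 + (j : ℕ) = (j : ℕ); omega
    obtain ⟨B, ⟨hB, hjB⟩, huniq⟩ := hP.2 (e1 n k hk j)
    have hBsmall : psmall k B := by
      rcases cut hP hB with h | h
      · intro i hi; have := h i hi; omega
      · exfalso
        have := h _ hjB
        have := j.isLt
        omega
    refine ⟨B.preimage (e1 n k hk) ((emb_inj 0 (by omega : 0 + k ≤ n + 1)).injOn),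
      ⟨mem_dec1.mpr ⟨B, ⟨hB, hBsmall⟩, rfl⟩, ?_⟩, ?_⟩
    · exact Finset.mem_preimage.mpr hjB
    · rintro X ⟨hX, hjX⟩
      obtain ⟨C, ⟨hC, hCs⟩, rfl⟩ := mem_dec1.mp hX
      replace hjX := Finset.mem_preimage.mp hjX
      have : C = B := huniq C ⟨hC, hjX⟩
      subst this
      rfl

lemma dec2_isPartition (hk : k ≤ n + 1) {P : Finset (Finset (Fin (n + 1)))}
    (hP : IsPartitionOf P) (hkOf : kOf P = k) : IsPartitionOf (dec2 hk P) := by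
  constructor
  · intro X hX
    obtain ⟨B, ⟨hB, hBl⟩, rfl⟩ := mem_dec2.mp hX
    exact nonempty_preimage_emb k (by omega) (large_bounds hk hBl) (hP.1 B hB)
  · intro j
    have hjk : (e2 n k hk j : ℕ) = k + (j : ℕ) := rfl
    obtain ⟨B, ⟨hB, hjB⟩, huniq⟩ := hP.2 (e2 n k hk j)
    have hBlarge : plarge k B := by
      rcases cut hP hB with h | h
      · exfalso
        have := h _ hjB
        rw [hjk] at this
        omega
      · intro i hi; have := h i hi; omega
    refine ⟨B.preimage (e2 n k hk) ((emb_inj k (by omega : k + (n + 1 - k) ≤ n + 1)).injOn),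
      ⟨mem_dec2.mpr ⟨B, ⟨hB, hBlarge⟩, rfl⟩, ?_⟩, ?_⟩
    · exact Finset.mem_preimage.mpr hjB
    · rintro X ⟨hX, hjX⟩
      obtain ⟨C, ⟨hC, hCl⟩, rfl⟩ := mem_dec2.mp hX
      replace hjX := Finset.mem_preimage.mp hjX
      have : C = B := huniq C ⟨hC, hjX⟩
      subst this
      rfl

lemma dec1_irreducible (hk : k ≤ n + 1) {P : Finset (Finset (Fin (n + 1)))}
    (hP : IsPartitionOf P) (hkOf : kOf P = k) : IsIrreduciblePartition (dec1 hk P) := by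
  have hk1 : 1 ≤ k := hkOf ▸ one_le_kOf P
  obtain ⟨L, ⟨C0, hC0r, hLC0⟩, hLval⟩ := exists_top_reachesPt hP
  obtain ⟨B0, hB0, h00, hchain⟩ := hC0r
  have hsmall : ∀ X, reachedB P X → psmall k X := by
    intro X hX i hi
    have := reachedB_small hX i hi
    omega
  have hrestr : ∀ {Y : Finset (Fin (n + 1))}, ReflTransGen (crel P) B0 Y →
      ReflTransGen (fun X Y => crel P X Y ∧ psmall k X ∧ psmall k Y) B0 Y := by
    intro Y h
    induction h with
    | refl => exact ReflTransGen.refl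
    | @tail Z W hprev step ih =>
      have hZr : reachedB P Z := ⟨B0, hB0, h00, hprev⟩
      have hWr : reachedB P W := ⟨B0, hB0, h00, hprev.tail step⟩
      exact ih.tail ⟨step, hsmall _ hZr, hsmall _ hWr⟩
  have hchain' := hrestr hchain
  have hpull : ReflTransGen
      (fun X Y => X ∈ dec1 hk P ∧ Y ∈ dec1 hk P ∧ Crosses X Y)
      (B0.preimage (e1 n k hk) ((emb_inj 0 (by omega : 0 + k ≤ n + 1)).injOn))
      (C0.preimage (e1 n k hk) ((emb_inj 0 (by omega : 0 + k ≤ n + 1)).injOn)) := by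
    refine ReflTransGen.lift
      (fun X => X.preimage (e1 n k hk) ((emb_inj 0 (by omega : 0 + k ≤ n + 1)).injOn)) ?_ _ _ hchain'
    rintro X Y ⟨⟨hXP, hYP, hcr⟩, hXs, hYs⟩
    refine ⟨mem_dec1.mpr ⟨X, ⟨hXP, hXs⟩, rfl⟩, mem_dec1.mpr ⟨Y, ⟨hYP, hYs⟩, rfl⟩, ?_⟩
    have hX' := image_preimage_emb 0 (by omega : 0 + k ≤ n + 1) (small_bounds hXs)
    have hY' := image_preimage_emb 0 (by omega : 0 + k ≤ n + 1) (small_bounds hYs)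
    rw [← hX', ← hY'] at hcr
    exact (crosses_image_emb_iff 0 _).mp hcr
  refine ⟨hk1, _, _, ?_, ?_, ?_, ?_, hpull⟩
  · exact mem_dec1.mpr ⟨B0, ⟨hB0, hsmall _ ⟨B0, hB0, h00, ReflTransGen.refl⟩⟩, rfl⟩
  · exact mem_dec1.mpr ⟨C0, ⟨chain_mem_right hchain hB0, hsmall _ ⟨B0, hB0, h00, hchain⟩⟩, rfl⟩
  · refine Finset.mem_preimage.mpr ?_
    have : e1 n k hk ⟨0, hk1⟩ = 0 := by
      apply Fin.ext; show 0 + 0 = 0; rfl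
    rwa [this]
  · refine Finset.mem_preimage.mpr ?_
    have : e1 n k hk ⟨k - 1, Nat.sub_lt hk1 Nat.one_pos⟩ = L := by
      apply Fin.ext; show 0 + (k - 1) = (L : ℕ); omega
    rwa [this]

lemma dec1_combine (hk : k ≤ n + 1) {R : Finset (Finset (Fin k))}
    {S : Finset (Finset (Fin (n + 1 - k)))} (hR : IsPartitionOf R) (hS : IsPartitionOf S) :
    dec1 hk (combine hk R S) = R := by
  have hfilter : (combine hk R S).filter (psmall k) = mapP (e1 n k hk) R := by
    ext X
    rw [Finset.mem_filter]
    constructor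
    · rintro ⟨hX, hsm⟩
      rcases Finset.mem_union.mp hX with h | h
      · exact h
      · exfalso
        obtain ⟨B, hB, rfl⟩ := mem_mapP.mp h
        obtain ⟨i, hi⟩ := (hS.1 B hB).image (e2 n k hk)
        have := part2_large h i hi
        have := hsm i hi
        omega
    · intro h
      exact ⟨Finset.mem_union_left _ h, part1_small h⟩
  rw [dec1, hfilter, mapP, Finset.image_image]
  rw [Finset.image_congr (g := id), Finset.image_id]
  intro B hB
  exact preimage_image_emb 0 _ B

lemma dec2_combine (hk : k ≤ n + 1) {R : Finset (Finset (Fin k))}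
    {S : Finset (Finset (Fin (n + 1 - k)))} (hR : IsPartitionOf R) (hS : IsPartitionOf S) :
    dec2 hk (combine hk R S) = S := by
  have hfilter : (combine hk R S).filter (plarge k) = mapP (e2 n k hk) S := by
    ext X
    rw [Finset.mem_filter]
    constructor
    · rintro ⟨hX, hsm⟩
      rcases Finset.mem_union.mp hX with h | h
      · exfalso
        obtain ⟨B, hB, rfl⟩ := mem_mapP.mp h
        obtain ⟨i, hi⟩ := (hR.1 B hB).image (e1 n k hk)
        have := part1_small h i hi
        have := hsm i hi
        omega
      · exact h
    · intro h
      exact ⟨Finset.mem_union_right _ h, part2_large h⟩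
  rw [dec2, hfilter, mapP, Finset.image_image]
  rw [Finset.image_congr (g := id), Finset.image_id]
  intro B hB
  exact preimage_image_emb k _ B

end BoolAux

namespace BoolAux

open Finset Relation

attribute [local instance] Classical.propDecidable

variable {n k : ℕ}

lemma crosses_symm {m : ℕ} {B C : Finset (Fin m)} (h : Crosses B C) : Crosses C B := by
  obtain ⟨a, b, c, d, h1, h2, h3, hm⟩ := h
  exact ⟨a, b, c, d, h1, h2, h3, hm.symm⟩

lemma isNoncrossing_iff {m : ℕ} {P : Finset (Finset (Fin m))} :
    IsNoncrossing P ↔ ∀ B ∈ P, ∀ C ∈ P, B ≠ C → ¬ Crosses B C := by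
  constructor
  · intro h B hB C hC hne hcr
    obtain ⟨a, b, c, d, h1, h2, h3, hm⟩ := hcr
    rcases hm with ⟨ha, hc, hb, hd⟩ | ⟨ha, hc, hb, hd⟩
    · exact h B hB C hC hne ⟨a, b, c, d, h1, h2, h3, ha, hc, hb, hd⟩
    · exact h C hC B hB (Ne.symm hne) ⟨a, b, c, d, h1, h2, h3, ha, hc, hb, hd⟩
  · intro h B hB C hC hne hcr
    obtain ⟨a, b, c, d, h1, h2, h3, ha, hc, hb, hd⟩ := hcr
    exact h B hB C hC hne ⟨a, b, c, d, h1, h2, h3, Or.inl ⟨ha, hc, hb, hd⟩⟩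

lemma noncrossing_combine (hk : k ≤ n + 1) {R : Finset (Finset (Fin k))}
    {S : Finset (Finset (Fin (n + 1 - k)))} (hR : IsPartitionOf R) (hS : IsPartitionOf S) :
    IsNoncrossing (combine hk R S) ↔ IsNoncrossing R ∧ IsNoncrossing S := by
  rw [isNoncrossing_iff, isNoncrossing_iff, isNoncrossing_iff]
  constructor
  · intro h
    constructor
    · intro B hB C hC hne hcr
      refine h (B.image (e1 n k hk)) (Finset.mem_union_left _ (mem_mapP.mpr ⟨B, hB, rfl⟩))
        (C.image (e1 n k hk)) (Finset.mem_union_left _ (mem_mapP.mpr ⟨C, hC, rfl⟩))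
        (fun he => hne (Finset.image_injective (emb_inj 0 (by omega : 0 + k ≤ n + 1)) he))
        ((crosses_image_emb_iff 0 _).mpr hcr)
    · intro B hB C hC hne hcr
      refine h (B.image (e2 n k hk)) (Finset.mem_union_right _ (mem_mapP.mpr ⟨B, hB, rfl⟩))
        (C.image (e2 n k hk)) (Finset.mem_union_right _ (mem_mapP.mpr ⟨C, hC, rfl⟩))
        (fun he => hne (Finset.image_injective
          (emb_inj k (by omega : k + (n + 1 - k) ≤ n + 1)) he))
        ((crosses_image_emb_iff k _).mpr hcr)
  · rintro ⟨h1, h2⟩ X hX Y hY hne hcr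
    rcases Finset.mem_union.mp hX with hX' | hX' <;> rcases Finset.mem_union.mp hY with hY' | hY'
    · obtain ⟨B, hB, rfl⟩ := mem_mapP.mp hX'
      obtain ⟨C, hC, rfl⟩ := mem_mapP.mp hY'
      exact h1 B hB C hC (fun he => hne (he ▸ rfl)) ((crosses_image_emb_iff 0 _).mp hcr)
    · exact not_crosses_sep (part1_small hX') (part2_large hY') hcr
    · exact not_crosses_sep (part1_small hY') (part2_large hX') (crosses_symm hcr)
    · obtain ⟨B, hB, rfl⟩ := mem_mapP.mp hX'
      obtain ⟨C, hC, rfl⟩ := mem_mapP.mp hY'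
      exact h2 B hB C hC (fun he => hne (he ▸ rfl)) ((crosses_image_emb_iff k _).mp hcr)

lemma interval_combine (hk : k ≤ n + 1) {R : Finset (Finset (Fin k))}
    {S : Finset (Finset (Fin (n + 1 - k)))} (hR : IsPartitionOf R) (hS : IsPartitionOf S) :
    (∀ B ∈ combine hk R S, IsIntervalSet B) ↔
      (∀ B ∈ R, IsIntervalSet B) ∧ (∀ B ∈ S, IsIntervalSet B) := by
  constructor
  · intro h
    constructor
    · intro B hB
      have := h (B.image (e1 n k hk)) (Finset.mem_union_left _ (mem_mapP.mpr ⟨B, hB, rfl⟩))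
      exact (isIntervalSet_image_emb_iff 0 _ (hR.1 B hB)).mp this
    · intro B hB
      have := h (B.image (e2 n k hk)) (Finset.mem_union_right _ (mem_mapP.mpr ⟨B, hB, rfl⟩))
      exact (isIntervalSet_image_emb_iff k _ (hS.1 B hB)).mp this
  · rintro ⟨h1, h2⟩ X hX
    rcases Finset.mem_union.mp hX with hX' | hX'
    · obtain ⟨B, hB, rfl⟩ := mem_mapP.mp hX'
      exact (isIntervalSet_image_emb_iff 0 _ (hR.1 B hB)).mpr (h1 B hB)
    · obtain ⟨B, hB, rfl⟩ := mem_mapP.mp hX'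
      exact (isIntervalSet_image_emb_iff k _ (hS.1 B hB)).mpr (h2 B hB)

/-- An irreducible interval partition consists of the single block `univ`. -/
lemma interval_irreducible_eq {m : ℕ} {P : Finset (Finset (Fin m))}
    (hP : IsPartitionOf P) (hint : ∀ B ∈ P, IsIntervalSet B)
    (hirr : IsIrreduciblePartition P) : P = {Finset.univ} := by
  obtain ⟨hm, B, C, hB, hC, h0B, hlC, hchain⟩ := hirr
  -- crossing steps collapse for interval partitions
  have hstep : ∀ X Y, (X ∈ P ∧ Y ∈ P ∧ Crosses X Y) → X = Y := by
    rintro X Y ⟨hX, hY, a, b, c, d, h1, h2, h3, hmem⟩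
    rcases hmem with ⟨ha, hc, hb, hd⟩ | ⟨ha, hc, hb, hd⟩
    · have hbX : b ∈ X := (isIntervalSet_iff ⟨a, ha⟩).mp (hint X hX) a ha c hc b
        (le_of_lt h1) (le_of_lt h2)
      exact block_eq hP hX hY hbX hb
    · have hbY : b ∈ Y := (isIntervalSet_iff ⟨a, ha⟩).mp (hint Y hY) a ha c hc b
        (le_of_lt h1) (le_of_lt h2)
      exact block_eq hP hY hX hbY hb ▸ rfl
  have hBC : B = C := by
    clear h0B hlC
    induction hchain with
    | refl => rfl
    | tail hprev step ih => rw [ih step.1, hstep _ _ step]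
  subst hBC
  have hBuniv : B = Finset.univ := by
    apply Finset.eq_univ_of_forall
    intro i
    refine (isIntervalSet_iff ⟨_, h0B⟩).mp (hint B hB) _ h0B _ hlC i ?_ ?_
    · exact Fin.mk_le_of_le_val (Nat.zero_le _)
    · rw [Fin.le_def]
      have := i.isLt
      show (i : ℕ) ≤ m - 1
      omega
  subst hBuniv
  ext X
  rw [Finset.mem_singleton]
  constructor
  · intro hX
    obtain ⟨i, hi⟩ := hP.1 X hX
    exact block_eq hP hX hB hi (Finset.mem_univ i)
  · rintro rfl
    exact hB

lemma univ_partition_interval_irreducible {m : ℕ} (hm : 1 ≤ m) :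
    IsPartitionOf ({Finset.univ} : Finset (Finset (Fin m))) ∧
      (∀ B ∈ ({Finset.univ} : Finset (Finset (Fin m))), IsIntervalSet B) ∧
      IsIrreduciblePartition ({Finset.univ} : Finset (Finset (Fin m))) := by
  have h0 : (0 : ℕ) < m := hm
  refine ⟨⟨?_, ?_⟩, ?_, ?_⟩
  · intro B hB
    rw [Finset.mem_singleton] at hB
    subst hB
    exact ⟨⟨0, h0⟩, Finset.mem_univ _⟩
  · intro i
    exact ⟨Finset.univ, ⟨Finset.mem_singleton_self _, Finset.mem_univ _⟩,
      fun X hX => Finset.mem_singleton.mp hX.1⟩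
  · intro B hB
    rw [Finset.mem_singleton] at hB
    subst hB
    refine ⟨⟨0, h0⟩, ⟨m - 1, by omega⟩, ?_⟩
    ext i
    simp only [Finset.mem_univ, Finset.mem_Icc, true_iff]
    constructor
    · exact Fin.mk_le_of_le_val (Nat.zero_le _)
    · rw [Fin.le_def]
      have := i.isLt
      show (i : ℕ) ≤ m - 1
      omega
  · exact ⟨h0, Finset.univ, Finset.univ, Finset.mem_singleton_self _,
      Finset.mem_singleton_self _, Finset.mem_univ _, Finset.mem_univ _, ReflTransGen.refl⟩

lemma partition_fin_zero {P : Finset (Finset (Fin 0))} : IsPartitionOf P ↔ P = ∅ := by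
  constructor
  · intro hP
    rw [Finset.eq_empty_iff_forall_notMem]
    intro B hB
    obtain ⟨i, _⟩ := hP.1 B hB
    exact i.elim0
  · rintro rfl
    exact ⟨fun B hB => absurd hB (Finset.notMem_empty B), fun i => i.elim0⟩

def Qt : ∀ {m : ℕ}, Finset (Finset (Fin m)) → Prop := fun {_} _ => True

def Qnc : ∀ {m : ℕ}, Finset (Finset (Fin m)) → Prop := fun {_} P => IsNoncrossing P

def Qint : ∀ {m : ℕ}, Finset (Finset (Fin m)) → Prop := fun {_} P => ∀ B ∈ P, IsIntervalSet B

end BoolAux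

namespace BoolAux

open Finset Relation

attribute [local instance] Classical.propDecidable

/-- Sum over partitions satisfying `Q` of products of `f` over block sizes. -/
noncomputable def ASum (f : ℕ → ℝ) (Q : ∀ {m : ℕ}, Finset (Finset (Fin m)) → Prop)
    (m : ℕ) : ℝ :=
  ∑ P ∈ Finset.univ.filter (fun P : Finset (Finset (Fin m)) => IsPartitionOf P ∧ Q P),
    ∏ B ∈ P, f B.card

/-- Sum over irreducible partitions satisfying `Q`. -/
noncomputable def TSum (f : ℕ → ℝ) (Q : ∀ {m : ℕ}, Finset (Finset (Fin m)) → Prop)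
    (m : ℕ) : ℝ :=
  ∑ P ∈ Finset.univ.filter (fun P : Finset (Finset (Fin m)) =>
      IsPartitionOf P ∧ Q P ∧ IsIrreduciblePartition P),
    ∏ B ∈ P, f B.card

lemma ASum_zero (f : ℕ → ℝ) (Q : ∀ {m : ℕ}, Finset (Finset (Fin m)) → Prop)
    (hQ0 : Q (∅ : Finset (Finset (Fin 0)))) : ASum f Q 0 = 1 := by
  rw [ASum]
  have : Finset.univ.filter (fun P : Finset (Finset (Fin 0)) => IsPartitionOf P ∧ Q P) =
      {∅} := by
    ext P
    simp only [Finset.mem_filter, Finset.mem_univ, true_and, Finset.mem_singleton]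
    constructor
    · rintro ⟨hP, _⟩
      exact partition_fin_zero.mp hP
    · rintro rfl
      exact ⟨partition_fin_zero.mpr rfl, hQ0⟩
  rw [this, Finset.sum_singleton, Finset.prod_empty]

lemma main_rec (f : ℕ → ℝ) (Q : ∀ {m : ℕ}, Finset (Finset (Fin m)) → Prop)
    (hQ : ∀ (n k : ℕ) (hk : k ≤ n + 1) (R : Finset (Finset (Fin k)))
      (S : Finset (Finset (Fin (n + 1 - k)))), IsPartitionOf R → IsPartitionOf S →
      (Q (combine hk R S) ↔ Q R ∧ Q S)) (n : ℕ) :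
    ASum f Q (n + 1) = ∑ k ∈ Finset.Icc 1 (n + 1), TSum f Q k * ASum f Q (n + 1 - k) := by
  classical
  rw [ASum]
  have hmaps : ∀ P ∈ Finset.univ.filter
      (fun P : Finset (Finset (Fin (n + 1))) => IsPartitionOf P ∧ Q P),
      kOf P ∈ Finset.Icc 1 (n + 1) := by
    intro P _
    rw [Finset.mem_Icc]
    exact ⟨one_le_kOf P, kOf_le P⟩
  rw [← Finset.sum_fiberwise_of_maps_to hmaps]
  apply Finset.sum_congr rfl
  intro k hk
  rw [Finset.mem_Icc] at hk
  have hkle : k ≤ n + 1 := hk.2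
  have hk1 : 1 ≤ k := hk.1
  rw [TSum, ASum, Finset.sum_mul_sum]
  rw [← Finset.sum_product']
  refine Finset.sum_bij' (i := fun P _ => (dec1 hkle P, dec2 hkle P))
    (j := fun RS _ => combine hkle RS.1 RS.2) ?_ ?_ ?_ ?_ ?_
  · -- hi : decompositions land in the product set
    intro P hP
    rw [Finset.mem_filter] at hP
    obtain ⟨hP', hkOf⟩ := hP
    rw [Finset.mem_filter] at hP'
    obtain ⟨-, hPart, hQP⟩ := hP'
    have hR := dec1_isPartition hkle hPart hkOf
    have hS := dec2_isPartition hkle hPart hkOf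
    have hsplit := hQ n k hkle _ _ hR hS
    rw [combine_dec hkle hPart hkOf] at hsplit
    obtain ⟨hQR, hQS⟩ := hsplit.mp hQP
    rw [Finset.mem_product, Finset.mem_filter, Finset.mem_filter]
    exact ⟨⟨Finset.mem_univ _, hR, hQR, dec1_irreducible hkle hPart hkOf⟩,
      Finset.mem_univ _, hS, hQS⟩
  · -- hj : combine lands in the fiber
    intro RS hRS
    rw [Finset.mem_product, Finset.mem_filter, Finset.mem_filter] at hRS
    obtain ⟨⟨_, hR, hQR, hRirr⟩, _, hS, hQS⟩ := hRS
    rw [Finset.mem_filter, Finset.mem_filter]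
    exact ⟨⟨Finset.mem_univ _, combine_isPartition hkle hR hS,
      (hQ n k hkle _ _ hR hS).mpr ⟨hQR, hQS⟩⟩, kOf_combine hkle hk1 hR hS hRirr⟩
  · -- left inverse
    intro P hP
    rw [Finset.mem_filter] at hP
    obtain ⟨hP', hkOf⟩ := hP
    rw [Finset.mem_filter] at hP'
    exact combine_dec hkle hP'.2.1 hkOf
  · -- right inverse
    intro RS hRS
    rw [Finset.mem_product, Finset.mem_filter, Finset.mem_filter] at hRS
    obtain ⟨⟨_, hR, _⟩, _, hS, _⟩ := hRS
    exact Prod.ext (dec1_combine hkle hR hS) (dec2_combine hkle hR hS)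
  · -- values agree
    intro P hP
    rw [Finset.mem_filter] at hP
    obtain ⟨hP', hkOf⟩ := hP
    rw [Finset.mem_filter] at hP'
    have hPart := hP'.2.1
    have hR := dec1_isPartition hkle hPart hkOf
    have hS := dec2_isPartition hkle hPart hkOf
    conv_lhs => rw [← combine_dec hkle hPart hkOf]
    exact prod_combine hkle hR hS f

/-- For the interval predicate, the irreducible sum is just `f`. -/
lemma TSum_interval (f : ℕ → ℝ) {m : ℕ} (hm : 1 ≤ m) :
    TSum f Qint m = f m := by
  rw [TSum]
  have key : ∀ P : Finset (Finset (Fin m)),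
      (IsPartitionOf P ∧ (∀ B ∈ P, IsIntervalSet B) ∧ IsIrreduciblePartition P) ↔
        P = {Finset.univ} := by
    intro P
    constructor
    · rintro ⟨h1, h2, h3⟩
      exact interval_irreducible_eq h1 h2 h3
    · rintro rfl
      exact univ_partition_interval_irreducible hm
  refine (Finset.sum_congr (s₂ := {({Finset.univ} : Finset (Finset (Fin m)))}) ?_
    fun x _ => rfl).trans ?_
  · ext P
    simp only [Finset.mem_filter, Finset.mem_univ, true_and, Finset.mem_singleton]
    exact key P
  · rw [Finset.sum_singleton, Finset.prod_singleton, Finset.card_univ, Fintype.card_fin]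

end BoolAux


namespace BoolAux

open Finset Relation

attribute [local instance] Classical.propDecidable

lemma finsum_to_filter {α : Type*} [Fintype α] (p : α → Prop) (F : α → ℝ) :
    (∑ᶠ x ∈ {y : α | p y}, F x) = ∑ x ∈ Finset.univ.filter p, F x := by
  rw [finsum_mem_eq_finite_toFinset_sum _ (Set.toFinite _)]
  congr 1
  ext x
  simp [Set.Finite.mem_toFinset]

lemma rec_M (f : ℕ → ℝ) (Q : ∀ {m : ℕ}, Finset (Finset (Fin m)) → Prop)
    (hQ : ∀ (n k : ℕ) (hk : k ≤ n + 1) (R : Finset (Finset (Fin k)))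
      (S : Finset (Finset (Fin (n + 1 - k)))), IsPartitionOf R → IsPartitionOf S →
      (Q (combine hk R S) ↔ Q R ∧ Q S))
    (hQ0 : Q (∅ : Finset (Finset (Fin 0))))
    (mo : ℕ → ℝ) (hmA : ∀ j, 1 ≤ j → mo j = ASum f Q j) (j : ℕ) (hj : 1 ≤ j) :
    mo j = ∑ k ∈ Finset.Icc 1 j, TSum f Q k * (if j - k = 0 then 1 else mo (j - k)) := by
  obtain ⟨j', rfl⟩ : ∃ j', j = j' + 1 := ⟨j - 1, by omega⟩
  rw [hmA _ hj, main_rec f Q hQ j']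
  refine Finset.sum_congr rfl fun k hk => ?_
  rw [Finset.mem_Icc] at hk
  congr 1
  by_cases h0 : j' + 1 - k = 0
  · rw [h0, if_pos rfl, ASum_zero f Q hQ0]
  · rw [if_neg h0, ← hmA _ (by omega)]

end BoolAux

open BoolAux in
/-- If the moments `m_n` have classical cumulants `c_n`, free cumulants `κ_n` and boolean
cumulants `b_n`, then `b_n = Σ_{π irreducible partition} Π c_{|V|}
= Σ_{π irreducible noncrossing partition} Π κ_{|V|}`. -/
theorem boolean_cumulants_eq_sum_irreducible (m c κ b : ℕ → ℝ)
    (hc : ∀ n : ℕ, 1 ≤ n →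
      m n = ∑ᶠ π ∈ {P : Finset (Finset (Fin n)) | IsPartitionOf P},
        ∏ B ∈ π, c B.card)
    (hκ : ∀ n : ℕ, 1 ≤ n →
      m n = ∑ᶠ π ∈ {P : Finset (Finset (Fin n)) | IsPartitionOf P ∧ IsNoncrossing P},
        ∏ B ∈ π, κ B.card)
    (hb : ∀ n : ℕ, 1 ≤ n →
      m n = ∑ᶠ π ∈ {P : Finset (Finset (Fin n)) | IsIntervalPartition P},
        ∏ B ∈ π, b B.card) :
    ∀ n : ℕ, 1 ≤ n →
      b n = (∑ᶠ π ∈ {P : Finset (Finset (Fin n)) | IsPartitionOf P ∧ IsIrreduciblePartition P},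
          ∏ B ∈ π, c B.card) ∧
      b n = (∑ᶠ π ∈ {P : Finset (Finset (Fin n)) |
            IsPartitionOf P ∧ IsNoncrossing P ∧ IsIrreduciblePartition P},
          ∏ B ∈ π, κ B.card) := by
  classical
  have hQt_split : ∀ (n k : ℕ) (hk : k ≤ n + 1) (R : Finset (Finset (Fin k)))
      (S : Finset (Finset (Fin (n + 1 - k)))), IsPartitionOf R → IsPartitionOf S →
      (Qt (combine hk R S) ↔ Qt R ∧ Qt S) :=
    fun _ _ _ _ _ _ _ => ⟨fun _ => ⟨trivial, trivial⟩, fun _ => trivial⟩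
  have hQnc_split : ∀ (n k : ℕ) (hk : k ≤ n + 1) (R : Finset (Finset (Fin k)))
      (S : Finset (Finset (Fin (n + 1 - k)))), IsPartitionOf R → IsPartitionOf S →
      (Qnc (combine hk R S) ↔ Qnc R ∧ Qnc S) :=
    fun _ _ hk _ _ hR hS => noncrossing_combine hk hR hS
  have hQint_split : ∀ (n k : ℕ) (hk : k ≤ n + 1) (R : Finset (Finset (Fin k)))
      (S : Finset (Finset (Fin (n + 1 - k)))), IsPartitionOf R → IsPartitionOf S →
      (Qint (combine hk R S) ↔ Qint R ∧ Qint S) :=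
    fun _ _ hk _ _ hR hS => interval_combine hk hR hS
  have hQt0 : Qt (∅ : Finset (Finset (Fin 0))) := trivial
  have hQnc0 : Qnc (∅ : Finset (Finset (Fin 0))) :=
    fun B hB => absurd hB (Finset.notMem_empty B)
  have hQint0 : Qint (∅ : Finset (Finset (Fin 0))) :=
    fun B hB => absurd hB (Finset.notMem_empty B)
  -- moments as ASums
  have hAc : ∀ j, 1 ≤ j → m j = ASum c Qt j := by
    intro j hj
    rw [hc j hj, finsum_to_filter, ASum]
    refine Finset.sum_congr ?_ fun x _ => rfl
    ext P
    simp only [Finset.mem_filter, Finset.mem_univ, true_and]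
    exact ⟨fun h => ⟨h, trivial⟩, fun h => h.1⟩
  have hAκ : ∀ j, 1 ≤ j → m j = ASum κ Qnc j := by
    intro j hj
    rw [hκ j hj, finsum_to_filter, ASum]
    refine Finset.sum_congr ?_ fun x _ => rfl
    ext P
    simp only [Finset.mem_filter, Finset.mem_univ, true_and]
    exact Iff.rfl
  have hAb : ∀ j, 1 ≤ j → m j = ASum b Qint j := by
    intro j hj
    rw [hb j hj, finsum_to_filter, ASum]
    refine Finset.sum_congr ?_ fun x _ => rfl
    ext P
    simp only [Finset.mem_filter, Finset.mem_univ, true_and]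
    exact Iff.rfl
  -- the three recursions
  have hrc := rec_M c Qt hQt_split hQt0 m hAc
  have hrκ := rec_M κ Qnc hQnc_split hQnc0 m hAκ
  have hrb0 := rec_M b Qint hQint_split hQint0 m hAb
  have hrb : ∀ j, 1 ≤ j → m j = ∑ k ∈ Finset.Icc 1 j,
      b k * (if j - k = 0 then 1 else m (j - k)) := by
    intro j hj
    rw [hrb0 j hj]
    refine Finset.sum_congr rfl fun k hk => ?_
    rw [Finset.mem_Icc] at hk
    rw [TSum_interval b hk.1]
  -- uniqueness by strong induction
  have main : ∀ N j, j ≤ N → 1 ≤ j → b j = TSum c Qt j ∧ b j = TSum κ Qnc j := by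
    intro N
    induction N with
    | zero => intro j h1 h2; omega
    | succ N ih =>
      intro j hjN hj1
      rcases Nat.lt_or_ge j (N + 1) with h | h
      · exact ih j (by omega) hj1
      · have hjeq : j = N + 1 := by omega
        subst hjeq
        have hsame : ∀ g : ℕ → ℝ, (∀ k, k ≤ N → 1 ≤ k → b k = g k) →
            ∑ k ∈ Finset.Icc 1 N, b k * (if N + 1 - k = 0 then 1 else m (N + 1 - k)) =
            ∑ k ∈ Finset.Icc 1 N, g k * (if N + 1 - k = 0 then 1 else m (N + 1 - k)) := by
          intro g hg
          refine Finset.sum_congr rfl fun k hk => ?_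
          rw [Finset.mem_Icc] at hk
          rw [hg k hk.2 hk.1]
        constructor
        · have e1 := (hrb (N + 1) (by omega)).symm.trans (hrc (N + 1) (by omega))
          rw [Finset.sum_Icc_succ_top (by omega), Finset.sum_Icc_succ_top (by omega)] at e1
          rw [hsame (fun k => TSum c Qt k) (fun k hk1 hk2 => (ih k hk1 hk2).1)] at e1
          have e2 := add_left_cancel e1
          simpa using e2
        · have e1 := (hrb (N + 1) (by omega)).symm.trans (hrκ (N + 1) (by omega))
          rw [Finset.sum_Icc_succ_top (by omega), Finset.sum_Icc_succ_top (by omega)] at e1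
          rw [hsame (fun k => TSum κ Qnc k) (fun k hk1 hk2 => (ih k hk1 hk2).2)] at e1
          have e2 := add_left_cancel e1
          simpa using e2
  intro n hn
  obtain ⟨h1, h2⟩ := main n n le_rfl hn
  constructor
  · rw [h1, TSum, finsum_to_filter]
    refine Finset.sum_congr ?_ fun x _ => rfl
    ext P
    simp only [Finset.mem_filter, Finset.mem_univ, true_and]
    exact ⟨fun h => ⟨h.1, h.2.2⟩, fun h => ⟨h.1, trivial, h.2⟩⟩
  · rw [h2, TSum, finsum_to_filter]
    refine Finset.sum_congr ?_ fun x _ => rfl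
    ext P
    simp only [Finset.mem_filter, Finset.mem_univ, true_and]
    exact Iff.rfl
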